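/- Let f be a relation on a set X with a bounded pseudometric d. For every x, y, z ∈ X, m_d^f(x,y) ≤ m_d^f(x,z) + m_d^f(z,y), where m_d^f(x,y) is the infimum over all finite sequences [(a₁,b₁),...,(aₙ,bₙ)] of pairs in f of the chain-bound max(d(x,a₁), d(b₁,a₂), ..., d(b_{n-1},aₙ), d(bₙ,y)). -/

import Mathlib

namespace ChainRec

variable {X : Type*}

/-- chain-length of a chain, with `x` the start point and `y` the end point.
For `c = [(a₁,b₁),…,(aₙ,bₙ)]` this is `d x a₁ + Σ d bᵢ a_{i+1} + d bₙ y`. -/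
noncomputable def chainLen (d : X → X → ℝ) : X → X → List (X × X) → ℝ
  | x, y, [] => d x y
  | x, y, p :: t => d x p.1 + chainLen d p.2 y t

/-- chain-bound of a chain: the max of all the gap distances. -/
noncomputable def chainBound (d : X → X → ℝ) : X → X → List (X × X) → ℝ
  | x, y, [] => d x y
  | x, y, p :: t => max (d x p.1) (chainBound d p.2 y t)

/-- The Aubry–Mather barrier function `ℓ_d^f`. -/
noncomputable def ell (d : X → X → ℝ) (f : Set (X × X)) (x y : X) : ℝ :=
  sInf { r | ∃ c : List (X × X), c ≠ [] ∧ (∀ p ∈ c, p ∈ f) ∧ r = chainLen d x y c }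

/-- The Conley barrier function `m_d^f`. -/
noncomputable def mbar (d : X → X → ℝ) (f : Set (X × X)) (x y : X) : ℝ :=
  sInf { r | ∃ c : List (X × X), c ≠ [] ∧ (∀ p ∈ c, p ∈ f) ∧ r = chainBound d x y c }


section Aux

variable {X : Type*} (d : X → X → ℝ)

lemma chainBound_nonneg (hd : ∀ a b, 0 ≤ d a b) :
    ∀ (c : List (X × X)) (x y : X), 0 ≤ chainBound d x y c := by
  intro c
  induction c with
  | nil => intro x y; exact hd x y
  | cons p t ih =>
    intro x y
    exact le_trans (hd x p.1) (le_max_left _ _)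

lemma chainBound_start_tri (hd : ∀ a b, 0 ≤ d a b)
    (htri : ∀ a b c, d a c ≤ d a b + d b c) :
    ∀ (c : List (X × X)) (x z y : X),
      chainBound d x y c ≤ d x z + chainBound d z y c := by
  intro c
  induction c with
  | nil => intro x z y; exact htri x z y
  | cons p t ih =>
    intro x z y
    simp only [chainBound]
    apply max_le
    · exact le_trans (htri x z p.1) (add_le_add (le_refl _) (le_max_left _ _))
    · have := hd x z
      have h2 : chainBound d p.2 y t ≤ max (d z p.1) (chainBound d p.2 y t) :=
        le_max_right _ _
      linarith

lemma chainBound_append (hd : ∀ a b, 0 ≤ d a b)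
    (htri : ∀ a b c, d a c ≤ d a b + d b c) :
    ∀ (c₁ c₂ : List (X × X)) (x z y : X),
      chainBound d x y (c₁ ++ c₂) ≤ chainBound d x z c₁ + chainBound d z y c₂ := by
  intro c₁
  induction c₁ with
  | nil =>
    intro c₂ x z y
    simpa [chainBound] using chainBound_start_tri d hd htri c₂ x z y
  | cons p t ih =>
    intro c₂ x z y
    simp only [List.cons_append, chainBound, List.append_eq]
    have hB : 0 ≤ chainBound d z y c₂ := chainBound_nonneg d hd c₂ z y
    apply max_le
    · have : d x p.1 ≤ max (d x p.1) (chainBound d p.2 z t) := le_max_left _ _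
      linarith
    · have h1 := ih c₂ p.2 z y
      have h2 : chainBound d p.2 z t ≤ max (d x p.1) (chainBound d p.2 z t) :=
        le_max_right _ _
      linarith

end Aux

theorem mbar_triangle [Nonempty X] (d : X → X → ℝ) (f : Set (X × X))
    (hrefl : ∀ x, d x x = 0) (hsymm : ∀ x y, d x y = d y x)
    (htri : ∀ x y z, d x z ≤ d x y + d y z)
    (hbdd : ∃ C, ∀ x y, d x y ≤ C)
    (x y z : X) :
    mbar d f x y ≤ mbar d f x z + mbar d f z y := by
  have hd : ∀ a b, 0 ≤ d a b := by
    intro a b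
    have := htri a b a
    rw [hrefl a, hsymm b a] at this
    linarith
  rcases f.eq_empty_or_nonempty with hf | ⟨q, hq⟩
  · have hempty : ∀ u v : X,
        { r | ∃ c : List (X × X), c ≠ [] ∧ (∀ p ∈ c, p ∈ f) ∧ r = chainBound d u v c } = ∅ := by
      intro u v
      ext r
      simp only [Set.mem_setOf_eq, Set.mem_empty_iff_false, iff_false]
      rintro ⟨c, hne, hmem, -⟩
      cases c with
      | nil => exact hne rfl
      | cons p t => exact absurd (hmem p List.mem_cons_self) (by simp [hf])
    simp only [mbar, hempty, Real.sInf_empty]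
    norm_num
  · -- sets are nonempty and bounded below by 0
    have hne : ∀ u v : X,
        { r | ∃ c : List (X × X), c ≠ [] ∧ (∀ p ∈ c, p ∈ f) ∧ r = chainBound d u v c }.Nonempty := by
      intro u v
      exact ⟨chainBound d u v [q], [q], by simp, by simpa using hq, rfl⟩
    have hbd : ∀ u v : X,
        BddBelow { r | ∃ c : List (X × X), c ≠ [] ∧ (∀ p ∈ c, p ∈ f) ∧ r = chainBound d u v c } := by
      intro u v
      refine ⟨0, ?_⟩
      rintro r ⟨c, -, -, rfl⟩
      exact chainBound_nonneg d hd c u v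
    -- key: for chains c₁ (x→z) and c₂ (z→y), mbar x y ≤ bound₁ + bound₂
    have key : ∀ r₁ ∈ { r | ∃ c : List (X × X), c ≠ [] ∧ (∀ p ∈ c, p ∈ f) ∧ r = chainBound d x z c },
        ∀ r₂ ∈ { r | ∃ c : List (X × X), c ≠ [] ∧ (∀ p ∈ c, p ∈ f) ∧ r = chainBound d z y c },
        mbar d f x y ≤ r₁ + r₂ := by
      rintro r₁ ⟨c₁, hc₁ne, hc₁f, rfl⟩ r₂ ⟨c₂, hc₂ne, hc₂f, rfl⟩
      have hmem : chainBound d x y (c₁ ++ c₂) ∈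
          { r | ∃ c : List (X × X), c ≠ [] ∧ (∀ p ∈ c, p ∈ f) ∧ r = chainBound d x y c } := by
        refine ⟨c₁ ++ c₂, by simp [hc₁ne], ?_, rfl⟩
        intro p hp
        rcases List.mem_append.mp hp with h | h
        · exact hc₁f p h
        · exact hc₂f p h
      have h1 : mbar d f x y ≤ chainBound d x y (c₁ ++ c₂) := csInf_le (hbd x y) hmem
      exact h1.trans (chainBound_append d hd htri c₁ c₂ x z y)
    have step1 : ∀ r₂ ∈ { r | ∃ c : List (X × X), c ≠ [] ∧ (∀ p ∈ c, p ∈ f) ∧ r = chainBound d z y c },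
        mbar d f x y - r₂ ≤ mbar d f x z := by
      intro r₂ hr₂
      apply le_csInf (hne x z)
      intro r₁ hr₁
      have := key r₁ hr₁ r₂ hr₂
      linarith
    have step2 : mbar d f x y - mbar d f x z ≤ mbar d f z y := by
      apply le_csInf (hne z y)
      intro r₂ hr₂
      have := step1 r₂ hr₂
      linarith
    linarith

end ChainRec
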